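/- The reverse of a well-ended path is well-ended, and the concatenation of two well-ended paths (whenever composable) is well-ended. -/
import Mathlib
open unitInterval Topology

/-- A path `α` is well-targeted if every neighborhood `U` of `α` in the space of paths
starting at `α 0` admits an open neighborhood `V` of `α 1` each of whose points is the
endpoint of some path in `U`. -/
def IsWellTargeted {X : Type*} [TopologicalSpace X] (α : C(I, X)) : Prop :=
  ∀ U : Set {β : C(I, X) // β 0 = α 0}, IsOpen U →
    (⟨α, rfl⟩ : {β : C(I, X) // β 0 = α 0}) ∈ U →
    ∃ V : Set X, IsOpen V ∧ α 1 ∈ V ∧ ∀ b ∈ V, ∃ β ∈ U, β.1 1 = b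

/-- A path `α` is well-ended if every neighborhood `U` of `α` in `𝒫X` admits open
neighborhoods `V₀, V₁` of `α 0, α 1` such that every pair `(a, b) ∈ V₀ × V₁` is joined
by a path in `U`. -/
def IsWellEnded {X : Type*} [TopologicalSpace X] (α : C(I, X)) : Prop :=
  ∀ U : Set C(I, X), IsOpen U → α ∈ U →
    ∃ V₀ V₁ : Set X, IsOpen V₀ ∧ IsOpen V₁ ∧ α 0 ∈ V₀ ∧ α 1 ∈ V₁ ∧
      ∀ a ∈ V₀, ∀ b ∈ V₁, ∃ β ∈ U, β 0 = a ∧ β 1 = b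

/-- A space is wep-connected if every pair of its points is joined by a well-ended path. -/
def WepConnected (X : Type*) [TopologicalSpace X] : Prop :=
  ∀ x y : X, ∃ α : C(I, X), α 0 = x ∧ α 1 = y ∧ IsWellEnded α

/-- The reverse of a path: `α⁻¹(t) = α(1 − t)`. -/
def reverseCM {X : Type*} [TopologicalSpace X] (α : C(I, X)) : C(I, X) :=
  α.comp ⟨unitInterval.symm, unitInterval.continuous_symm⟩

/-- Concatenation of two paths `α, β : I → X` with `α 1 = β 0`. -/
noncomputable def concatCM {X : Type*} [TopologicalSpace X] (α β : C(I, X)) (h : α 1 = β 0) :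
    C(I, X) :=
  ((⟨α, rfl, rfl⟩ : Path (α 0) (α 1)).trans
    ((⟨β, rfl, rfl⟩ : Path (β 0) (β 1)).cast h rfl)).toContinuousMap

lemma continuous_concat' {X : Type*} [TopologicalSpace X] :
    Continuous (fun p : {p : C(I,X) × C(I,X) // p.1 1 = p.2 0} =>
      concatCM p.1.1 p.1.2 p.2) := by
  apply ContinuousMap.continuous_of_continuous_uncurry
  exact Path.trans_continuous_family
    (fun p : {p : C(I,X) × C(I,X) // p.1 1 = p.2 0} =>
      (⟨p.1.1, rfl, rfl⟩ : Path (p.1.1 0) (p.1.1 1)))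
    ((ContinuousEval.continuous_eval.comp
      ((continuous_fst.comp (continuous_subtype_val)).prodMap continuous_id)))
    (fun p => ((⟨p.1.2, rfl, rfl⟩ : Path (p.1.2 0) (p.1.2 1)).cast p.2 rfl))
    ((ContinuousEval.continuous_eval.comp
      ((continuous_snd.comp (continuous_subtype_val)).prodMap continuous_id)))

lemma concatCM_zero {X : Type*} [TopologicalSpace X] (α β : C(I,X)) (h : α 1 = β 0) :
    concatCM α β h 0 = α 0 := by
  show ((⟨α, rfl, rfl⟩ : Path (α 0) (α 1)).trans _) 0 = α 0
  simp

lemma concatCM_one {X : Type*} [TopologicalSpace X] (α β : C(I,X)) (h : α 1 = β 0) :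
    concatCM α β h 1 = β 1 := by
  show ((⟨α, rfl, rfl⟩ : Path (α 0) (α 1)).trans _) 1 = β 1
  simp

lemma reverseCM_zero {X : Type*} [TopologicalSpace X] (α : C(I,X)) :
    reverseCM α 0 = α 1 := by simp [reverseCM]

lemma reverseCM_one {X : Type*} [TopologicalSpace X] (α : C(I,X)) :
    reverseCM α 1 = α 0 := by simp [reverseCM]

/-- The reverse of a well-ended path is well-ended, and the concatenation of two
well-ended (composable) paths is well-ended. -/
theorem isWellEnded_reverse_and_concat {X : Type*} [TopologicalSpace X] :
    (∀ α : C(I, X), IsWellEnded α → IsWellEnded (reverseCM α)) ∧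
    (∀ (α β : C(I, X)) (h : α 1 = β 0), IsWellEnded α → IsWellEnded β →
      IsWellEnded (concatCM α β h)) := by
  constructor
  · intro α hα U hU hmem
    have hcont : Continuous (fun γ : C(I,X) => reverseCM γ) :=
      ContinuousMap.continuous_precomp _
    obtain ⟨V₀, V₁, hV₀, hV₁, h0, h1, H⟩ :=
      hα (reverseCM ⁻¹' U) (hU.preimage hcont) hmem
    refine ⟨V₁, V₀, hV₁, hV₀, ?_, ?_, ?_⟩
    · rw [reverseCM_zero]; exact h1
    · rw [reverseCM_one]; exact h0
    · intro a ha b hb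
      obtain ⟨γ, hγU, hγ0, hγ1⟩ := H b hb a ha
      exact ⟨reverseCM γ, hγU, by rw [reverseCM_zero, hγ1],
        by rw [reverseCM_one, hγ0]⟩
  · intro α β h hα hβ U hU hmem
    set F : {p : C(I,X) × C(I,X) // p.1 1 = p.2 0} → C(I,X) :=
      fun p => concatCM p.1.1 p.1.2 p.2 with hF
    have hFc : Continuous F := continuous_concat'
    have hpre : IsOpen (F ⁻¹' U) := hU.preimage hFc
    obtain ⟨W, hW, hWeq⟩ := isOpen_induced_iff.mp hpre
    have hmemW : ((α, β) : C(I,X) × C(I,X)) ∈ W := by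
      have : (⟨(α, β), h⟩ : {p : C(I,X) × C(I,X) // p.1 1 = p.2 0}) ∈ F ⁻¹' U := hmem
      rw [← hWeq] at this; exact this
    obtain ⟨Wα, Wβ, hWα, hWβ, hαW, hβW, hsub⟩ := isOpen_prod_iff.mp hW α β hmemW
    obtain ⟨V₀, V₁, hV₀, hV₁, h0, h1, Hα⟩ := hα Wα hWα hαW
    obtain ⟨V₀', V₁', hV₀', hV₁', h0', h1', Hβ⟩ := hβ Wβ hWβ hβW
    refine ⟨V₀, V₁', hV₀, hV₁', ?_, ?_, ?_⟩
    · rw [concatCM_zero]; exact h0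
    · rw [concatCM_one]; exact h1'
    · intro a ha b hb
      obtain ⟨α', hα'W, hα'0, hα'1⟩ := Hα a ha (α 1) h1
      obtain ⟨β', hβ'W, hβ'0, hβ'1⟩ := Hβ (β 0) h0' b hb
      have hc : α' 1 = β' 0 := by rw [hα'1, hβ'0, h]
      have hpmem : (⟨(α', β'), hc⟩ : {p : C(I,X) × C(I,X) // p.1 1 = p.2 0}) ∈ F ⁻¹' U := by
        rw [← hWeq]
        exact hsub (Set.mk_mem_prod hα'W hβ'W)
      exact ⟨concatCM α' β' hc, hpmem, by rw [concatCM_zero]; exact hα'0,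
        by rw [concatCM_one]; exact hβ'1⟩
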